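/- arXiv:1401.1266 — 2 statements merged into one kernel-verified Lean document; each statement's English description precedes it below -/
import Mathlib

section
/- A c.e. subset A of ℕ is D-maximal and Type 4 if and only if A is Herrmann, i.e., A is D-maximal and strongly r-separable. -/
open Set Function

/-- A set of naturals is computably enumerable (c.e.) -/
def CESet (A : Set ℕ) : Prop := REPred (· ∈ A)

/-- A set of naturals is computable -/
def ComputableSet (A : Set ℕ) : Prop := ComputablePred (· ∈ A)

/-- X ⊆* Y : X is almost contained in Y -/
def SubsetStar (X Y : Set ℕ) : Prop := (X \ Y).Finite

/-- X =* Y : X and Y differ by a finite set -/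
def EqStar (X Y : Set ℕ) : Prop := (X \ Y).Finite ∧ (Y \ X).Finite

/-- G is a generating set for 𝒟(A): a countable family of c.e. sets, each disjoint
from A, such that every c.e. set disjoint from A is almost covered by finitely many
members of G. -/
def Generates (A : Set ℕ) (G : Set (Set ℕ)) : Prop :=
  G.Countable ∧ (∀ X ∈ G, CESet X) ∧ (∀ X ∈ G, Disjoint X A) ∧
  ∀ D : Set ℕ, CESet D → Disjoint D A →
    ∃ F : Set (Set ℕ), F ⊆ G ∧ F.Finite ∧ SubsetStar D (⋃₀ F)

/-- S is simple -/
def SimpleSet (S : Set ℕ) : Prop :=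
  CESet S ∧ Sᶜ.Infinite ∧ ∀ W : Set ℕ, CESet W → Disjoint W S → W.Finite

/-- A is 𝒟-maximal -/
def DMaximal (A : Set ℕ) : Prop :=
  CESet A ∧ ∀ W : Set ℕ, CESet W → ∃ D : Set ℕ, CESet D ∧ Disjoint D A ∧
    (SubsetStar W (A ∪ D) ∨ EqStar (W ∪ A ∪ D) Set.univ)

/-- M is r-maximal -/
def RMaximal (M : Set ℕ) : Prop :=
  CESet M ∧ Mᶜ.Infinite ∧
    ∀ R : Set ℕ, ComputableSet R → (R ∩ Mᶜ).Finite ∨ (Rᶜ ∩ Mᶜ).Finite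

/-- M is maximal -/
def MaximalSet (M : Set ℕ) : Prop :=
  CESet M ∧ Mᶜ.Infinite ∧
    ∀ W : Set ℕ, CESet W → M ⊆ W → (W \ M).Finite ∨ Wᶜ.Finite

/-- B is atomless -/
def AtomlessSet (B : Set ℕ) : Prop :=
  ∀ C : Set ℕ, CESet C → B ⊆ C → Cᶜ.Infinite →
    ∃ E : Set ℕ, CESet E ∧ SubsetStar C E ∧ (E \ C).Infinite ∧ Eᶜ.Infinite

/-- A0, A1 form a Friedberg splitting of A -/
def FriedbergSplitting (A0 A1 A : Set ℕ) : Prop :=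
  CESet A0 ∧ CESet A1 ∧ Disjoint A0 A1 ∧ A0 ∪ A1 = A ∧
    ∀ W : Set ℕ, CESet W → ¬ CESet (W \ A) → ¬ CESet (W \ A0) ∧ ¬ CESet (W \ A1)

/-- E is a major subset of D -/
def MajorIn (E D : Set ℕ) : Prop :=
  CESet E ∧ CESet D ∧ E ⊆ D ∧ (D \ E).Infinite ∧
    ∀ W : Set ℕ, CESet W → SubsetStar Dᶜ W → SubsetStar Eᶜ W

/-- H is hh-simple: the lattice of c.e. supersets of H mod finite is a boolean algebra -/
def HHSimple (H : Set ℕ) : Prop :=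
  CESet H ∧ Hᶜ.Infinite ∧
    ∀ W : Set ℕ, CESet W → ∃ V : Set ℕ, CESet V ∧
      EqStar ((W ∪ H) ∩ (V ∪ H)) H ∧ EqStar (W ∪ V ∪ H) Set.univ

/-- A is strongly r-separable -/
def StronglyRSeparable (A : Set ℕ) : Prop :=
  ∀ B : Set ℕ, CESet B → Disjoint B A →
    ∃ C : Set ℕ, ComputableSet C ∧ B ⊆ C ∧ Disjoint C A ∧ (C \ B).Infinite

/-- Structure of a Type 5 generating family: D0 together with the R_i. -/
def Type5Family (D0 : Set ℕ) (R : ℕ → Set ℕ) : Prop :=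
  CESet D0 ∧ ¬ ComputableSet D0 ∧ D0.Infinite ∧
  Function.Injective R ∧ (∀ i, D0 ≠ R i) ∧
  (∀ i, ComputableSet (R i) ∧ (R i).Infinite) ∧
  Pairwise (Function.onFun Disjoint R) ∧
  (∀ i, Disjoint D0 (R i))

/-- Structure of a Type 7 generating family: D0 together with the R_i. -/
def Type7Family (D0 : Set ℕ) (R : ℕ → Set ℕ) : Prop :=
  CESet D0 ∧ ¬ ComputableSet D0 ∧
  Function.Injective R ∧ (∀ i, D0 ≠ R i) ∧
  (∀ i, ComputableSet (R i) ∧ (R i).Infinite) ∧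
  Pairwise (Function.onFun Disjoint R) ∧
  {i : ℕ | (D0 ∩ R i).Nonempty}.Infinite

/-- Structure of a Type 8 generating family: the D_i together with the R_i. -/
def Type8Family (D R : ℕ → Set ℕ) : Prop :=
  Function.Injective D ∧ Function.Injective R ∧ (∀ i j, D i ≠ R j) ∧
  (∀ i, CESet (D i) ∧ ¬ ComputableSet (D i)) ∧
  Pairwise (Function.onFun Disjoint D) ∧
  (∀ i, ComputableSet (R i) ∧ (R i).Infinite) ∧
  Pairwise (Function.onFun Disjoint R)

/-- Structure of a Type 9 generating family: the nested D_i together with the R_i. -/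
def Type9Family (D R : ℕ → Set ℕ) : Prop :=
  Function.Injective R ∧ (∀ i j, D i ≠ R j) ∧
  (∀ i, ComputableSet (R i) ∧ (R i).Infinite) ∧
  Pairwise (Function.onFun Disjoint R) ∧
  (∀ i, CESet (D i) ∧ ¬ ComputableSet (D i) ∧ (D i).Infinite) ∧
  (∀ l, D l ⊆ D (l + 1)) ∧
  (∀ l, ¬ CESet (D (l + 1) \ D l)) ∧
  (∀ l, {j : ℕ | (R j \ D l).Infinite}.Infinite)

def IsType1 (G : Set (Set ℕ)) : Prop := G = {∅}

def IsType2 (G : Set (Set ℕ)) : Prop :=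
  ∃ R : Set ℕ, G = {R} ∧ ComputableSet R ∧ R.Infinite

def IsType3 (G : Set (Set ℕ)) : Prop :=
  ∃ W : Set ℕ, G = {W} ∧ CESet W ∧ ¬ ComputableSet W ∧ W.Infinite

def IsType4 (G : Set (Set ℕ)) : Prop :=
  ∃ R : ℕ → Set ℕ, G = Set.range R ∧ Function.Injective R ∧
    (∀ i, ComputableSet (R i) ∧ (R i).Infinite) ∧
    Pairwise (Function.onFun Disjoint R)

def IsType5 (G : Set (Set ℕ)) : Prop :=
  ∃ (D0 : Set ℕ) (R : ℕ → Set ℕ), G = insert D0 (Set.range R) ∧ Type5Family D0 R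

def IsType6 (G : Set (Set ℕ)) : Prop :=
  ∃ D : ℕ → Set ℕ, G = Set.range D ∧ Function.Injective D ∧
    (∀ i, CESet (D i) ∧ ¬ ComputableSet (D i) ∧ (D i).Infinite) ∧
    Pairwise (Function.onFun Disjoint D)

def IsType7 (G : Set (Set ℕ)) : Prop :=
  ∃ (D0 : Set ℕ) (R : ℕ → Set ℕ), G = insert D0 (Set.range R) ∧ Type7Family D0 R

def IsType8 (G : Set (Set ℕ)) : Prop :=
  ∃ D R : ℕ → Set ℕ, G = Set.range D ∪ Set.range R ∧ Type8Family D R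

def IsType9 (G : Set (Set ℕ)) : Prop :=
  ∃ D R : ℕ → Set ℕ, G = Set.range D ∪ Set.range R ∧ Type9Family D R

def IsType10 (G : Set (Set ℕ)) : Prop :=
  ∃ D : ℕ → Set ℕ, G = Set.range D ∧
    (∀ i, CESet (D i) ∧ ¬ ComputableSet (D i) ∧ (D i).Infinite) ∧
    (∀ l, D l ⊆ D (l + 1)) ∧
    (∀ l, ¬ CESet (D (l + 1) \ D l))

/-- G is a generating set of Type n (n = 1, …, 10). -/
def GenTypeN (n : ℕ) (G : Set (Set ℕ)) : Prop :=
  match n with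
  | 1 => IsType1 G
  | 2 => IsType2 G
  | 3 => IsType3 G
  | 4 => IsType4 G
  | 5 => IsType5 G
  | 6 => IsType6 G
  | 7 => IsType7 G
  | 8 => IsType8 G
  | 9 => IsType9 G
  | 10 => IsType10 G
  | _ => False

/-- The c.e. set A is of Type n: 𝒟(A) has a generating set of Type n
but no generating set of any Type m < n. -/
def SetOfType (A : Set ℕ) (n : ℕ) : Prop :=
  (∃ G : Set (Set ℕ), Generates A G ∧ GenTypeN n G) ∧
  ∀ m : ℕ, m < n → ¬ ∃ G : Set (Set ℕ), Generates A G ∧ GenTypeN m G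

/-- (F_i) is an A-special list. -/
def ASpecialList (A : Set ℕ) (F : ℕ → Set ℕ) : Prop :=
  F 0 = A ∧ (∀ i, CESet (F i) ∧ ¬ ComputableSet (F i)) ∧
  Pairwise (Function.onFun Disjoint F) ∧
  ∀ W : Set ℕ, CESet W → ∃ i : ℕ,
    SubsetStar W (⋃ l ≤ i, F l) ∨ EqStar (W ∪ ⋃ l ≤ i, F l) Set.univ

lemma compPred_or {p q : ℕ → Prop} (hp : ComputablePred p) (hq : ComputablePred q) :
    ComputablePred fun a => p a ∨ q a := by
  obtain ⟨f, hf, rfl⟩ := ComputablePred.computable_iff.1 hp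
  obtain ⟨g, hg, rfl⟩ := ComputablePred.computable_iff.1 hq
  exact ComputablePred.computable_iff.2 ⟨fun a => f a || g a,
    (hf.cond (Computable.const true) hg).of_eq (by intro a; cases h : f a <;> simp [h]),
    by funext a; simp⟩

lemma compPred_and {p q : ℕ → Prop} (hp : ComputablePred p) (hq : ComputablePred q) :
    ComputablePred fun a => p a ∧ q a := by
  obtain ⟨f, hf, rfl⟩ := ComputablePred.computable_iff.1 hp
  obtain ⟨g, hg, rfl⟩ := ComputablePred.computable_iff.1 hq
  exact ComputablePred.computable_iff.2 ⟨fun a => f a && g a,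
    (hf.cond hg (Computable.const false)).of_eq (by intro a; cases h : f a <;> simp [h]),
    by funext a; simp⟩

lemma compSet_union {X Y : Set ℕ} (hX : ComputableSet X) (hY : ComputableSet Y) :
    ComputableSet (X ∪ Y) :=
  (compPred_or hX hY).of_eq (by intro a; simp [Set.mem_union])

lemma compSet_diff {X Y : Set ℕ} (hX : ComputableSet X) (hY : ComputableSet Y) :
    ComputableSet (X \ Y) :=
  (compPred_and hX hY.not).of_eq (by intro a; simp [Set.mem_diff])

lemma compSet_empty : ComputableSet (∅ : Set ℕ) :=
  ComputablePred.computable_iff.2 ⟨fun _ => false, Computable.const false, by funext a; simp⟩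

lemma compSet_singleton (a : ℕ) : ComputableSet ({a} : Set ℕ) := by
  refine ComputablePred.computable_iff.2 ⟨fun x => x == a, ?_, ?_⟩
  · exact Primrec.to_comp (Primrec.beq.comp Primrec.id (Primrec.const a))
  · exact funext fun x => propext ⟨fun h => beq_iff_eq.mpr (Set.mem_singleton_iff.mp h),
      fun h => Set.mem_singleton_iff.mpr (beq_iff_eq.mp h)⟩

lemma compSet_finite {X : Set ℕ} (hX : X.Finite) : ComputableSet X := by
  refine Set.Finite.induction_on (motive := fun s _ => ComputableSet s) X hX compSet_empty ?_
  intro a s _ _ ih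
  have h : ({a} : Set ℕ) ∪ s = insert a s := (Set.insert_eq a s).symm
  exact h ▸ compSet_union (compSet_singleton a) ih

lemma ceSet_of_comp {X : Set ℕ} (hX : ComputableSet X) : CESet X := hX.to_re

lemma ceSet_empty : CESet (∅ : Set ℕ) := ceSet_of_comp compSet_empty

open Nat.Partrec (Code)
lemma ce_countable : {D : Set ℕ | CESet D}.Countable := by
  apply Set.Countable.mono _ (Set.countable_range fun c : Code => {n : ℕ | (c.eval n).Dom})
  rintro D hD
  have h : Partrec fun a : ℕ => (Part.assert (a ∈ D) fun _ => Part.some ()).map fun _ => 0 :=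
    Partrec.map hD (Computable.const 0).to₂
  obtain ⟨c, hc⟩ := Nat.Partrec.Code.exists_code.1 (Partrec.nat_iff.1 h)
  refine ⟨c, ?_⟩
  ext n
  have he : c.eval n = (Part.assert (n ∈ D) fun _ => Part.some ()).map fun _ => 0 := by
    have := congrFun hc n
    simpa using this
  simp only [Set.mem_setOf_eq, he, Part.dom_iff_mem]
  constructor
  · rintro ⟨y, hy⟩
    rw [Part.mem_map_iff] at hy
    simp only [Part.mem_assert_iff] at hy
    obtain ⟨u, ⟨hu, _⟩, _⟩ := hy
    exact hu
  · intro hn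
    exact ⟨0, (Part.mem_map_iff _).2 ⟨(), Part.mem_assert_iff.2 ⟨hn, by simp⟩, rfl⟩⟩

lemma compSet_sUnion {F : Set (Set ℕ)} (hF : F.Finite) :
    (∀ X ∈ F, ComputableSet X) → ComputableSet (⋃₀ F) := by
  refine Set.Finite.induction_on
    (motive := fun s _ => (∀ X ∈ s, ComputableSet X) → ComputableSet (⋃₀ s)) F hF ?_ ?_
  · intro _; rw [Set.sUnion_empty]; exact compSet_empty
  · intro X s _ _ ih h
    rw [Set.sUnion_insert]
    exact compSet_union (h X (Set.mem_insert _ _)) (ih fun Y hY => h Y (Set.mem_insert_of_mem _ hY))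

theorem stmt_17 (A : Set ℕ) (hA : CESet A) :
    (DMaximal A ∧ SetOfType A 4) ↔ (DMaximal A ∧ StronglyRSeparable A) := by
  constructor
  · rintro ⟨hD, hT4⟩
    refine ⟨hD, ?_⟩
    obtain ⟨⟨G, hGen, hG4⟩, -⟩ := hT4
    have hG4' : IsType4 G := hG4
    obtain ⟨R, rfl, hRinj, hRprop, hRdisj⟩ := hG4'
    obtain ⟨-, hce, hdisjA, hcover⟩ := hGen
    intro B hB hBA
    obtain ⟨F, hFG, hFfin, hFcov⟩ := hcover B hB hBA
    have hIfin : (R ⁻¹' F).Finite := hFfin.preimage fun _ _ _ _ h => hRinj h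
    obtain ⟨j, hj⟩ := hIfin.infinite_compl.nonempty
    have hjF : ∀ x, x ∈ R j → x ∈ ⋃₀ F → False := by
      intro x hxR hxU
      obtain ⟨X, hXF, hxX⟩ := hxU
      obtain ⟨i, rfl⟩ := hFG hXF
      rcases eq_or_ne i j with rfl | hne
      · exact hj hXF
      · exact (Set.disjoint_left.1 (hRdisj hne)) hxX hxR
    refine ⟨⋃₀ F ∪ (B \ ⋃₀ F) ∪ R j, ?_, ?_, ?_, ?_⟩
    · refine compSet_union (compSet_union (compSet_sUnion hFfin ?_) (compSet_finite hFcov))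
        (hRprop j).1
      intro X hX
      obtain ⟨i, rfl⟩ := hFG hX
      exact (hRprop i).1
    · intro x hx
      by_cases hxU : x ∈ ⋃₀ F
      · exact Or.inl (Or.inl hxU)
      · exact Or.inl (Or.inr ⟨hx, hxU⟩)
    · refine (Set.disjoint_union_left).2 ⟨(Set.disjoint_union_left).2 ⟨?_, ?_⟩, ?_⟩
      · rw [Set.disjoint_left]
        rintro x ⟨X, hXF, hxX⟩ hxA
        exact (Set.disjoint_left.1 (hdisjA X (hFG hXF))) hxX hxA
      · exact hBA.mono_left Set.diff_subset
      · exact hdisjA (R j) ⟨j, rfl⟩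
    · have hsub : R j \ (B \ ⋃₀ F) ⊆ (⋃₀ F ∪ (B \ ⋃₀ F) ∪ R j) \ B := by
        rintro x ⟨hxR, hxnB⟩
        exact ⟨Or.inr hxR, fun hxB => hxnB ⟨hxB, fun hxU => hjF x hxR hxU⟩⟩
      exact (((hRprop j).2).diff hFcov).mono hsub
  · rintro ⟨hD, hsep⟩
    refine ⟨hD, ?_, ?_⟩
    · -- existence of a Type 4 generating set
      have hScnt : {D : Set ℕ | CESet D ∧ Disjoint D A}.Countable :=
        ce_countable.mono fun D hD => hD.1
      have hSne : ({D : Set ℕ | CESet D ∧ Disjoint D A}).Nonempty :=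
        ⟨∅, ceSet_empty, Set.disjoint_left.2 fun a ha => absurd ha (Set.notMem_empty a)⟩
      obtain ⟨B, hBr⟩ := hScnt.exists_eq_range hSne
      have hBk : ∀ k, CESet (B k) ∧ Disjoint (B k) A := by
        intro k
        have h : B k ∈ Set.range B := ⟨k, rfl⟩
        rw [← hBr] at h
        exact h
      have hsep' : ∀ S : Set ℕ, ∃ C : Set ℕ, CESet S → Disjoint S A →
          ComputableSet C ∧ S ⊆ C ∧ Disjoint C A ∧ (C \ S).Infinite := by
        intro S
        by_cases h1 : CESet S
        · by_cases h2 : Disjoint S A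
          · exact (hsep S h1 h2).imp fun C hC _ _ => hC
          · exact ⟨∅, fun _ h => absurd h h2⟩
        · exact ⟨∅, fun h => absurd h h1⟩
      choose g hg using hsep'
      set C : ℕ → Set ℕ := fun k => Nat.rec (g (B 0)) (fun k Ck => g (Ck ∪ g (B (k+1)))) k
        with hCdef
      have hgB : ∀ k, ComputableSet (g (B k)) ∧ B k ⊆ g (B k) ∧ Disjoint (g (B k)) A ∧
          (g (B k) \ B k).Infinite := fun k => hg _ (hBk k).1 (hBk k).2
      have hCs : ∀ k, C (k+1) = g (C k ∪ g (B (k+1))) := fun _ => rfl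
      have hmain : ∀ k, ComputableSet (C k) ∧ Disjoint (C k) A := by
        intro k
        induction k with
        | zero => exact ⟨(hgB 0).1, (hgB 0).2.2.1⟩
        | succ k ih =>
          have hu : ComputableSet (C k ∪ g (B (k+1))) := compSet_union ih.1 (hgB (k+1)).1
          have hd : Disjoint (C k ∪ g (B (k+1))) A :=
            Set.disjoint_union_left.2 ⟨ih.2, (hgB (k+1)).2.2.1⟩
          obtain ⟨h1, _, h3, _⟩ := hg _ (ceSet_of_comp hu) hd
          exact ⟨h1, h3⟩
      have hstep : ∀ k, C k ∪ g (B (k+1)) ⊆ C (k+1) ∧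
          (C (k+1) \ (C k ∪ g (B (k+1)))).Infinite := by
        intro k
        have hu : ComputableSet (C k ∪ g (B (k+1))) := compSet_union (hmain k).1 (hgB (k+1)).1
        have hd : Disjoint (C k ∪ g (B (k+1))) A :=
          Set.disjoint_union_left.2 ⟨(hmain k).2, (hgB (k+1)).2.2.1⟩
        obtain ⟨_, h2, _, h4⟩ := hg _ (ceSet_of_comp hu) hd
        exact ⟨h2, h4⟩
      have hmono : ∀ k, C k ⊆ C (k+1) := fun k => Set.subset_union_left.trans (hstep k).1
      have hmono' : ∀ {j k : ℕ}, j ≤ k → C j ⊆ C k := by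
        intro j k h
        induction h with
        | refl => exact subset_rfl
        | step _ ih => exact ih.trans (hmono _)
      have hBsub : ∀ k, B k ⊆ C k := by
        intro k
        cases k with
        | zero => exact (hgB 0).2.1
        | succ k => exact ((hgB (k+1)).2.1.trans Set.subset_union_right).trans (hstep k).1
      set R : ℕ → Set ℕ := fun k => Nat.rec (C 0) (fun k _ => C (k+1) \ C k) k with hRdef
      have hRs : ∀ k, R (k+1) = C (k+1) \ C k := fun _ => rfl
      have hRcomp : ∀ k, ComputableSet (R k) := by
        intro k
        cases k with
        | zero => exact (hmain 0).1
        | succ k => exact compSet_diff (hmain (k+1)).1 (hmain k).1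
      have hRinf : ∀ k, (R k).Infinite := by
        intro k
        cases k with
        | zero => exact ((hgB 0).2.2.2).mono Set.diff_subset
        | succ k => exact (hstep k).2.mono (Set.diff_subset_diff_right Set.subset_union_left)
      have hRsubC : ∀ k, R k ⊆ C k := by
        intro k
        cases k with
        | zero => exact subset_rfl
        | succ k => exact Set.diff_subset
      have hRdisjA : ∀ k, Disjoint (R k) A := fun k => (hmain k).2.mono_left (hRsubC k)
      have hpair : Pairwise (Function.onFun Disjoint R) := by
        have key : ∀ i j, i < j → Disjoint (R i) (R j) := by
          intro i j hij
          cases j with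
          | zero => omega
          | succ j =>
            rw [Set.disjoint_left]
            intro x hxR hx
            exact hx.2 (hmono' (Nat.lt_succ_iff.1 hij) (hRsubC i hxR))
        intro i j hne
        rcases lt_or_gt_of_ne hne with h | h
        · exact key i j h
        · exact (key j i h).symm
      have hRinj : Function.Injective R := by
        intro i j hij
        by_contra hne
        have h0 := hpair hne
        rw [Function.onFun, hij] at h0
        exact hRinf j (by rw [disjoint_self.1 h0]; exact Set.finite_empty)
      have hCcover : ∀ m, ∀ x ∈ C m, ∃ i ≤ m, x ∈ R i := by
        intro m
        induction m with
        | zero => exact fun x hx => ⟨0, le_rfl, hx⟩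
        | succ m ih =>
          intro x hx
          by_cases hxm : x ∈ C m
          · obtain ⟨i, hi, hxi⟩ := ih x hxm
            exact ⟨i, hi.trans (Nat.le_succ m), hxi⟩
          · refine ⟨m+1, le_rfl, ?_⟩
            rw [hRs]
            exact ⟨hx, hxm⟩
      refine ⟨Set.range R, ⟨Set.countable_range R, ?_, ?_, ?_⟩,
        show IsType4 (Set.range R) from ⟨R, rfl, hRinj, fun i => ⟨hRcomp i, hRinf i⟩, hpair⟩⟩
      · rintro X ⟨i, rfl⟩; exact ceSet_of_comp (hRcomp i)
      · rintro X ⟨i, rfl⟩; exact hRdisjA i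
      · intro D hDce hDA
        have hmem : D ∈ Set.range B := by rw [← hBr]; exact ⟨hDce, hDA⟩
        obtain ⟨k, rfl⟩ := hmem
        refine ⟨R '' {i | i ≤ k}, Set.image_subset_range R _, (Set.finite_le_nat k).image R, ?_⟩
        have hsub : B k ⊆ ⋃₀ (R '' {i | i ≤ k}) := by
          intro x hx
          obtain ⟨i, hi, hxi⟩ := hCcover k x (hBsub k hx)
          exact ⟨R i, ⟨i, hi, rfl⟩, hxi⟩
        unfold SubsetStar
        rw [Set.diff_eq_empty.2 hsub]
        exact Set.finite_empty
    · -- no generating set of smaller type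
      intro m hm
      rintro ⟨G, hGen, hTm⟩
      obtain ⟨hcnt, hce, hdisjA, hcover⟩ := hGen
      have gencontra : ∀ S : Set ℕ, G = {S} → CESet S → Disjoint S A → False := by
        intro S hG hS hSA
        obtain ⟨Cc, hCc, hSC, hCA, hCinf⟩ := hsep S hS hSA
        obtain ⟨F, hFG, _, hFcov⟩ := hcover Cc (ceSet_of_comp hCc) hCA
        have hU : ⋃₀ F ⊆ S := by
          rintro x ⟨X, hXF, hxX⟩
          have hXG := hFG hXF
          rw [hG, Set.mem_singleton_iff] at hXG
          rwa [hXG] at hxX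
        exact hCinf (hFcov.subset (Set.diff_subset_diff_right hU))
      interval_cases m
      · exact hTm
      · exact gencontra ∅ hTm ceSet_empty
          (Set.disjoint_left.2 fun a ha => absurd ha (Set.notMem_empty a))
      · obtain ⟨S, hG, hScomp, _⟩ := (hTm : IsType2 G)
        exact gencontra S hG (ceSet_of_comp hScomp) (hdisjA S (by rw [hG]; exact rfl))
      · obtain ⟨S, hG, hSce, _, _⟩ := (hTm : IsType3 G)
        exact gencontra S hG hSce (hdisjA S (by rw [hG]; exact rfl))
end

section
/- Let A be a noncomputable c.e. subset of ℕ and let X be a c.e. set disjoint from A. Then A is D-maximal and the singleton family {X} generates D(A) if and only if A ∪ X is maximal. -/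
open Set Function

theorem rePred_union' {p q : ℕ → Prop} (hp : REPred p) (hq : REPred q) :
    REPred fun n => p n ∨ q n := by
  obtain ⟨k, pk, hk⟩ := Partrec.merge' hp hq
  exact pk.dom_re.of_eq fun n => by
    rw [(hk n).2]; simp [Part.assert]

theorem ceSet_union' {A B : Set ℕ} (hA : CESet A) (hB : CESet B) :
    CESet (A ∪ B) :=
  (rePred_union' hA hB).of_eq fun n => (Set.mem_union n A B).symm

theorem primrecPred_mem_list' (l : List ℕ) : PrimrecPred fun n => n ∈ l := by
  induction l with
  | nil => exact ((Primrec.const false).of_eq fun n => by simp :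
      Primrec fun n : ℕ => decide (n ∈ ([] : List ℕ))).primrecPred
  | cons a l ih =>
      have h1 : PrimrecPred fun n : ℕ => n = a :=
        Primrec.eq.comp Primrec.id (Primrec.const a)
      exact (h1.or ih).of_eq fun n => by simp [List.mem_cons, eq_comm]

theorem ceSet_of_finite' {S : Set ℕ} (h : S.Finite) : CESet S := by
  classical
  have : ComputablePred (· ∈ S) :=
    ⟨Classical.decPred _,
      ((primrecPred_mem_list' h.toFinset.toList).decide.to_comp).of_eq fun n =>
        decide_eq_decide.2 (by simp [Set.Finite.mem_toFinset])⟩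
  exact this.to_re

theorem computableSet_of_ce_co_ce' {A : Set ℕ} (h1 : CESet A) (h2 : CESet Aᶜ) :
    ComputableSet A :=
  ComputablePred.computable_iff_re_compl_re'.2
    ⟨h1, h2.of_eq fun n => Set.mem_compl_iff A n⟩

/-- Key lemma: if A ∪ X is maximal, A is noncomputable c.e., X c.e. disjoint from A,
then every c.e. D disjoint from A satisfies D ∖ X finite. -/
theorem key_almost_sub {A X : Set ℕ} (hA : CESet A) (hnc : ¬ ComputableSet A)
    (hX : CESet X) (hdisj : Disjoint X A) (hM : MaximalSet (A ∪ X))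
    {D : Set ℕ} (hD : CESet D) (hDdisj : Disjoint D A) : (D \ X).Finite := by
  have hW : CESet ((A ∪ X) ∪ D) := ceSet_union' hM.1 hD
  rcases hM.2.2 _ hW Set.subset_union_left with h | h
  · exact h.subset fun n hn => ⟨Or.inr hn.1, fun hm => by
      rcases hm with hm | hm
      · exact Set.disjoint_left.1 hDdisj hn.1 hm
      · exact hn.2 hm⟩
  · exfalso
    apply hnc
    refine computableSet_of_ce_co_ce' hA ?_
    have hcompl : Aᶜ = X ∪ (D ∪ ((A ∪ X) ∪ D)ᶜ) := by
      ext n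
      simp only [Set.mem_compl_iff, Set.mem_union, not_or]
      constructor
      · intro hnA
        by_cases hx : n ∈ X
        · exact Or.inl hx
        · by_cases hd : n ∈ D
          · exact Or.inr (Or.inl hd)
          · exact Or.inr (Or.inr ⟨⟨hnA, hx⟩, hd⟩)
      · rintro (hx | hd | hc)
        · exact Set.disjoint_left.1 hdisj hx
        · exact Set.disjoint_left.1 hDdisj hd
        · exact hc.1.1
    rw [hcompl]
    exact ceSet_union' hX (ceSet_union' hD (ceSet_of_finite' h))

theorem stmt_19 (A X : Set ℕ) (hA : CESet A) (hnc : ¬ ComputableSet A)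
    (hX : CESet X) (hdisj : Disjoint X A) :
    (DMaximal A ∧ Generates A {X}) ↔ MaximalSet (A ∪ X) := by
  constructor
  · rintro ⟨⟨_, hDmax⟩, hGen⟩
    refine ⟨ceSet_union' hA hX, ?_, ?_⟩
    · intro hfin
      apply hnc
      refine computableSet_of_ce_co_ce' hA ?_
      have hcompl : Aᶜ = X ∪ (A ∪ X)ᶜ := by
        ext n
        simp only [Set.mem_compl_iff, Set.mem_union, not_or]
        constructor
        · intro hnA
          by_cases hx : n ∈ X
          · exact Or.inl hx
          · exact Or.inr ⟨hnA, hx⟩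
        · rintro (hx | hc)
          · exact Set.disjoint_left.1 hdisj hx
          · exact hc.1
      rw [hcompl]
      exact ceSet_union' hX (ceSet_of_finite' hfin)
    · intro W hW hsub
      obtain ⟨D, hD, hDdisj, hcase⟩ := hDmax W hW
      obtain ⟨F, hFsub, _, hDF⟩ := hGen.2.2.2 D hD hDdisj
      have hFX : ⋃₀ F ⊆ X := by
        intro n hn
        obtain ⟨t, htF, hnt⟩ := hn
        have := hFsub htF
        rw [Set.mem_singleton_iff] at this
        rwa [this] at hnt
      have hDX : (D \ X).Finite := hDF.subset fun n hn => ⟨hn.1, fun h => hn.2 (hFX h)⟩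
      rcases hcase with h | h
      · left
        apply (h.union hDX).subset
        intro n hn
        simp only [Set.mem_union, SubsetStar, Set.mem_diff] at hn ⊢
        rcases hn with ⟨hnW, hnAX⟩
        push_neg at hnAX
        by_cases hd : n ∈ D
        · exact Or.inr ⟨hd, hnAX.2⟩
        · exact Or.inl ⟨hnW, fun hm => by
            rcases hm with hm | hm
            · exact hnAX.1 hm
            · exact hd hm⟩
      · right
        apply (h.2.union hDX).subset
        intro n hn
        rw [Set.mem_compl_iff] at hn
        have hnA : n ∉ A := fun h => hn (hsub (Or.inl h))
        have hnX : n ∉ X := fun h => hn (hsub (Or.inr h))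
        by_cases hd : n ∈ D
        · exact Or.inr ⟨hd, hnX⟩
        · exact Or.inl ⟨trivial, fun hm => by
            rcases hm with (hm | hm) | hm
            · exact hn hm
            · exact hnA hm
            · exact hd hm⟩
  · intro hM
    constructor
    · refine ⟨hA, fun W hW => ⟨X, hX, hdisj, ?_⟩⟩
      have hW' : CESet ((A ∪ X) ∪ W) := ceSet_union' hM.1 hW
      rcases hM.2.2 _ hW' Set.subset_union_left with h | h
      · left
        apply h.subset
        intro n hn
        exact ⟨Or.inr hn.1, hn.2⟩
      · right
        constructor
        · simp
        · apply h.subset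
          intro n hn
          have hn2 : n ∉ W ∪ A ∪ X := hn.2
          intro hm
          apply hn2
          rcases hm with (hm | hm) | hm
          · exact Or.inl (Or.inr hm)
          · exact Or.inr hm
          · exact Or.inl (Or.inl hm)
    · refine ⟨Set.countable_singleton X,
        fun Y hY => by rwa [Set.mem_singleton_iff.1 hY],
        fun Y hY => by rw [Set.mem_singleton_iff.1 hY]; exact hdisj, ?_⟩
      intro D hD hDdisj
      refine ⟨{X}, le_refl _, Set.finite_singleton X, ?_⟩
      rw [Set.sUnion_singleton]
      exact key_almost_sub hA hnc hX hdisj hM hD hDdisj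
end
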